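/- For any positive root γ of a simple root system, the upper ideal I⟨≽γ⟩ = {ν ∈ Δ⁺ : ν ≽ γ} is a lattice under the root order: any two elements of I⟨≽γ⟩ have a least upper bound and a greatest lower bound within I⟨≽γ⟩. -/

import Mathlib

open scoped RealInnerProductSpace

/-- Combinatorial data of the set of positive roots of a (reduced, irreducible,
crystallographic) root system of a simple Lie algebra, with a chosen set of
simple roots, sitting in a real inner product space `V`. -/
structure SimpleRS (V : Type*) [NormedAddCommGroup V] [InnerProductSpace ℝ V] where
  /-- the positive roots Δ⁺ -/
  pos : Finset V
  /-- the simple roots Π -/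
  simple : Finset V
  simple_sub : simple ⊆ pos
  indep : LinearIndependent ℝ (fun α : {x // x ∈ simple} => (α : V))
  root_ne : ∀ γ ∈ pos, γ ≠ (0 : V)
  /-- `coeff γ α` is the coefficient of the simple root `α` in `γ` -/
  coeff : V → V → ℕ
  coeff_spec : ∀ γ ∈ pos, γ = ∑ α ∈ simple, (coeff γ α : ℝ) • α
  /-- the reflection of a root in a root is again a root (positive or negative) -/
  reflect_mem : ∀ α ∈ pos, ∀ γ ∈ pos,
    (γ - (2 * ⟪γ, α⟫ / ⟪α, α⟫) • α ∈ pos ∨ -(γ - (2 * ⟪γ, α⟫ / ⟪α, α⟫) • α) ∈ pos)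
  crystallographic : ∀ α ∈ pos, ∀ γ ∈ pos, ∃ z : ℤ, 2 * ⟪γ, α⟫ / ⟪α, α⟫ = (z : ℝ)
  reduced : ∀ α ∈ pos, (2 : ℝ) • α ∉ pos
  /-- irreducibility: the Dynkin diagram is connected -/
  irreducible : ∀ S ⊆ simple, (∀ α ∈ S, ∀ β ∈ simple, β ∉ S → ⟪α, β⟫ = 0) →
      S = ∅ ∨ S = simple
  /-- the highest root θ -/
  highest : V
  highest_mem : highest ∈ pos
  highest_spec : ∀ γ ∈ pos, ∃ c : V → ℕ, highest - γ = ∑ α ∈ simple, (c α : ℝ) • α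

namespace SimpleRS

variable {V : Type*} [NormedAddCommGroup V] [InnerProductSpace ℝ V] (R : SimpleRS V)

/-- the root order: `μ ≼ ν` iff `ν − μ` is a nonnegative integral combination
of simple roots -/
def rle (μ ν : V) : Prop := ∃ c : V → ℕ, ν - μ = ∑ α ∈ R.simple, (c α : ℝ) • α

/-- the support of a root: simple roots occurring with nonzero coefficient -/
def supp (γ : V) : Set V := {α | α ∈ R.simple ∧ R.coeff γ α ≠ 0}

/-- the height of a root -/
def ht (γ : V) : ℕ := ∑ α ∈ R.simple, R.coeff γ α

/-- the root system is of type `A_n`: its Dynkin diagram is a simply laced chain -/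
def IsTypeA : Prop :=
  ∃ (n : ℕ) (e : Fin n ≃ {x // x ∈ R.simple}),
    (∀ i j : Fin n, ⟪(e i : V), (e j : V)⟫ ≠ 0 ↔ ((i : ℤ) - (j : ℤ)).natAbs ≤ 1) ∧
    (∀ i j : Fin n, ‖(e i : V)‖ = ‖(e j : V)‖)

/-- all roots have the same length -/
def SimplyLaced : Prop := ∀ α ∈ R.pos, ∀ β ∈ R.pos, ‖α‖ = ‖β‖

/-- a positive root `γ` is commutative if the upper ideal it generates is abelian,
i.e. no two of its elements sum to a root -/
def IsCom (γ : V) : Prop :=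
  ∀ ν₁ ∈ R.pos, ∀ ν₂ ∈ R.pos, R.rle γ ν₁ → R.rle γ ν₂ →
    ν₁ + ν₂ ∉ R.pos ∧ -(ν₁ + ν₂) ∉ R.pos

/-- the coefficientwise floor `⌊θ/2⌋` of half the highest root -/
def floorTheta : V := ∑ α ∈ R.simple, ((R.coeff R.highest α / 2 : ℕ) : ℝ) • α

end SimpleRS

namespace SimpleRS

variable {V : Type*} [NormedAddCommGroup V] [InnerProductSpace ℝ V] (R : SimpleRS V)

open scoped Classical

/-- real combination of simple roots -/
def SR (c : V → ℝ) : V := ∑ α ∈ R.simple, c α • α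

/-- natural combination of simple roots -/
def SN (c : V → ℕ) : V := ∑ α ∈ R.simple, (c α : ℝ) • α

lemma SN_eq_SR (c : V → ℕ) : R.SN c = R.SR fun α => (c α : ℝ) := rfl

lemma SR_add (c d : V → ℝ) : R.SR (fun α => c α + d α) = R.SR c + R.SR d := by
  simp [SR, add_smul, Finset.sum_add_distrib]

lemma SN_add (c d : V → ℕ) : R.SN (fun α => c α + d α) = R.SN c + R.SN d := by
  simp only [SN_eq_SR, Nat.cast_add]; exact R.SR_add _ _

lemma SR_ext {c d : V → ℝ} (h : R.SR c = R.SR d) : ∀ α ∈ R.simple, c α = d α := by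
  intro α hα
  have h0 : ∑ i ∈ R.simple.attach, (c i - d i) • (i : V) = 0 := by
    have e : ∑ i ∈ R.simple.attach, (c (i : V) - d (i : V)) • (i : V)
        = ∑ α ∈ R.simple, (c α - d α) • α :=
      Finset.sum_attach R.simple (fun α => (c α - d α) • α)
    rw [e]
    have e2 : ∑ α ∈ R.simple, (c α - d α) • α = R.SR c - R.SR d := by
      simp [SR, sub_smul, Finset.sum_sub_distrib]
    rw [e2, h, sub_self]
  have h3 := linearIndependent_iff'.mp R.indep R.simple.attach (fun i => c i - d i) h0
    ⟨α, hα⟩ (Finset.mem_attach _ _)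
  have h4 : c α - d α = 0 := h3
  linarith

lemma SR_eq_zero {c : V → ℝ} (h : R.SR c = 0) : ∀ α ∈ R.simple, c α = 0 := by
  have h0 : R.SR c = R.SR (fun _ => 0) := by rw [h]; simp [SR]
  exact R.SR_ext h0

lemma coeff_spec' {γ : V} (h : γ ∈ R.pos) : γ = R.SN (R.coeff γ) := R.coeff_spec γ h

lemma coeff_eq {γ : V} (h : γ ∈ R.pos) {c : V → ℕ} (hc : γ = R.SN c) :
    ∀ α ∈ R.simple, c α = R.coeff γ α := by
  intro α hα
  have h1 := R.SR_ext (c := fun α => (c α : ℝ)) (d := fun α => (R.coeff γ α : ℝ))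
    (by rw [← SN_eq_SR, ← SN_eq_SR, ← hc, ← R.coeff_spec' h]) α hα
  have h2 : (c α : ℝ) = (R.coeff γ α : ℝ) := h1
  exact_mod_cast h2

lemma rle_refl (μ : V) : R.rle μ μ := ⟨fun _ => 0, by simp⟩

lemma rle_trans {μ ν ρ : V} (h1 : R.rle μ ν) (h2 : R.rle ν ρ) : R.rle μ ρ := by
  obtain ⟨c, hc⟩ := h1; obtain ⟨d, hd⟩ := h2
  refine ⟨fun α => c α + d α, ?_⟩
  show ρ - μ = R.SN (fun α => c α + d α)
  rw [R.SN_add]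
  have e1 : R.SN c = ν - μ := hc.symm
  have e2 : R.SN d = ρ - ν := hd.symm
  rw [e1, e2]; abel

/-- a single simple root as a combination -/
lemma SN_single {α : V} (hα : α ∈ R.simple) :
    R.SN (fun β => if β = α then 1 else 0) = α := by
  have e : ∀ β ∈ R.simple, ((if β = α then (1:ℕ) else 0 : ℕ) : ℝ) • β
      = if β = α then β else 0 := by
    intro β _; by_cases h : β = α <;> simp [h]
  rw [SN, Finset.sum_congr rfl e, Finset.sum_ite_eq' R.simple α (fun β => β), if_pos hα]

lemma SR_coeff_add {μ : V} (hμ : μ ∈ R.pos) (c : V → ℝ) :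
    R.SR (fun α => (R.coeff μ α : ℝ) + c α) = μ + R.SR c := by
  rw [R.SR_add]
  congr 1
  exact (R.coeff_spec' hμ).symm

lemma pos_add_nonneg_ne_zero {μ : V} (hμ : μ ∈ R.pos) {c : V → ℝ}
    (hc : ∀ α ∈ R.simple, 0 ≤ c α) : μ + R.SR c ≠ 0 := by
  intro h
  have h2 : R.SR (fun α => (R.coeff μ α : ℝ) + c α) = R.SR (fun _ => 0) := by
    rw [R.SR_coeff_add hμ, h]; simp [SR]
  have hz := R.SR_ext h2
  apply R.root_ne μ hμ
  rw [R.coeff_spec' hμ, SN]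
  apply Finset.sum_eq_zero
  intro α hα
  have h1 : (R.coeff μ α : ℝ) + c α = 0 := hz α hα
  have h3 : (0:ℝ) ≤ (R.coeff μ α : ℝ) := Nat.cast_nonneg _
  have h4 : (R.coeff μ α : ℝ) = 0 := by have := hc α hα; linarith
  rw [h4, zero_smul]

lemma rle_pos_ne_zero {μ ζ : V} (hμ : μ ∈ R.pos) (h : R.rle μ ζ) : ζ ≠ 0 := by
  obtain ⟨c, hc⟩ := h
  intro h0
  rw [h0, zero_sub] at hc
  have : μ + R.SN c = 0 := by rw [show R.SN c = -μ from hc.symm]; abel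
  exact R.pos_add_nonneg_ne_zero hμ (c := fun α => (c α : ℝ))
    (fun α _ => by positivity) this

lemma pos_of_rle_isRoot {μ ζ : V} (hμ : μ ∈ R.pos) (h : R.rle μ ζ)
    (hr : ζ ∈ R.pos ∨ -ζ ∈ R.pos) : ζ ∈ R.pos := by
  rcases hr with hr | hr
  · exact hr
  · exfalso
    obtain ⟨c, hc⟩ := h
    have h2 : (-ζ) + R.SR (fun α => (R.coeff μ α : ℝ) + c α) = 0 := by
      rw [R.SR_coeff_add hμ]
      have e1 : R.SR (fun α => ((c α : ℕ) : ℝ)) = ζ - μ := hc.symm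
      rw [e1]; abel
    exact R.pos_add_nonneg_ne_zero hr (c := fun α => (R.coeff μ α : ℝ) + c α)
      (fun α _ => by positivity) h2

end SimpleRS

section Part2
variable {V : Type*} [NormedAddCommGroup V] [InnerProductSpace ℝ V] (R : SimpleRS V)
namespace SimpleRS
open scoped Classical

lemma inner_self_pos' {x : V} (hx : x ≠ 0) : 0 < ⟪x, x⟫ :=
  lt_of_le_of_ne real_inner_self_nonneg
    (fun h => hx ((@inner_self_eq_zero ℝ _ _ _ _ x).mp h.symm))

lemma inner_SN_left (c : V → ℕ) (x : V) :
    ⟪R.SN c, x⟫ = ∑ α ∈ R.simple, (c α : ℝ) * ⟪α, x⟫ := by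
  rw [SN, sum_inner]
  exact Finset.sum_congr rfl fun α _ => real_inner_smul_left _ _ _

lemma exists_pos_inner {c : V → ℕ} {x : V} (h : 0 < ⟪R.SN c, x⟫) :
    ∃ α ∈ R.simple, c α ≠ 0 ∧ 0 < ⟪α, x⟫ := by
  by_contra hcon
  push_neg at hcon
  have : ⟪R.SN c, x⟫ ≤ 0 := by
    rw [R.inner_SN_left]
    apply Finset.sum_nonpos
    intro α hα
    rcases eq_or_ne (c α) 0 with h0 | h0
    · simp [h0]
    · have := hcon α hα h0
      have : ⟪α, x⟫ ≤ 0 := this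
      have hc0 : (0:ℝ) ≤ (c α : ℝ) := Nat.cast_nonneg _
      exact mul_nonpos_of_nonneg_of_nonpos hc0 this
  linarith

lemma exists_neg_inner {c : V → ℕ} {x : V} (h : ⟪R.SN c, x⟫ < 0) :
    ∃ α ∈ R.simple, c α ≠ 0 ∧ ⟪α, x⟫ < 0 := by
  by_contra hcon
  push_neg at hcon
  have : 0 ≤ ⟪R.SN c, x⟫ := by
    rw [R.inner_SN_left]
    apply Finset.sum_nonneg
    intro α hα
    rcases eq_or_ne (c α) 0 with h0 | h0
    · simp [h0]
    · have h1 := hcon α hα h0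
      exact mul_nonneg (Nat.cast_nonneg _) h1
  linarith

/-- equality case of Cauchy-Schwarz -/
lemma parallel_of_cs {p q : V} (hp : p ≠ 0)
    (h : ⟪p, q⟫ * ⟪p, q⟫ = ⟪p, p⟫ * ⟪q, q⟫) : q = (⟪p, q⟫ / ⟪p, p⟫) • p := by
  have hpp : 0 < ⟪p, p⟫ := inner_self_pos' hp
  set v : V := ⟪p, p⟫ • q - ⟪p, q⟫ • p with hv
  have hvv : ⟪v, v⟫ = 0 := by
    have hc : ⟪q, p⟫ = ⟪p, q⟫ := real_inner_comm p q
    rw [hv]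
    simp only [inner_sub_left, inner_sub_right, real_inner_smul_left, real_inner_smul_right, hc]
    linear_combination (-⟪p, p⟫ : ℝ) * h
  have hv0 : v = 0 := (@inner_self_eq_zero ℝ _ _ _ _ v).mp hvv
  have : ⟪p, p⟫ • q = ⟪p, q⟫ • p := by
    have := sub_eq_zero.mp hv0
    exact this
  rw [div_eq_inv_mul, ← smul_smul]
  rw [← this, smul_smul, inv_mul_cancel₀ (ne_of_gt hpp), one_smul]

lemma int_ge_one {z : ℤ} (h : (0:ℝ) < (z : ℝ)) : 1 ≤ z := by exact_mod_cast h

lemma int_le_neg_one {z : ℤ} (h : ((z : ℝ)) < 0) : z ≤ -1 := by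
  have : z < 0 := by exact_mod_cast h
  omega

/-- two distinct positive roots with positive inner product differ by a root -/
lemma string_sub {p q : V} (hp : p ∈ R.pos) (hq : q ∈ R.pos) (hpq : p ≠ q)
    (hin : 0 < ⟪p, q⟫) : p - q ∈ R.pos ∨ q - p ∈ R.pos := by
  have hp0 : p ≠ 0 := R.root_ne p hp
  have hq0 : q ≠ 0 := R.root_ne q hq
  have hpp : 0 < ⟪p, p⟫ := inner_self_pos' hp0
  have hqq : 0 < ⟪q, q⟫ := inner_self_pos' hq0
  obtain ⟨z, hz⟩ := R.crystallographic q hq p hp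
  obtain ⟨w, hw⟩ := R.crystallographic p hp q hq
  rw [real_inner_comm p q] at hw
  have hz1 : 1 ≤ z := int_ge_one (by rw [← hz]; positivity)
  have hw1 : 1 ≤ w := int_ge_one (by rw [← hw]; positivity)
  by_cases hpar : ⟪p, q⟫ * ⟪p, q⟫ = ⟪p, p⟫ * ⟪q, q⟫
  · -- parallel case: impossible
    exfalso
    have hq' := parallel_of_cs hp0 hpar
    set t : ℝ := ⟪p, q⟫ / ⟪p, p⟫ with hts
    have ht : 0 < t := div_pos hin hpp
    have hwt : (w : ℝ) = 2 * t := by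
      rw [← hw, hts]; ring
    have hzw : (z : ℝ) * (w : ℝ) = 4 := by
      rw [← hz, ← hw]
      field_simp
      nlinarith [hpar]
    have hzw' : z * w = 4 := by exact_mod_cast hzw
    have hw4 : w ≤ 4 := by nlinarith [hz1, hw1, hzw']
    interval_cases w
    · -- w = 1, t = 1/2, p = 2q
      have ht2 : t = 1/2 := by
        have : (1:ℝ) = 2 * t := by exact_mod_cast hwt
        linarith
      have hp2 : p = (2:ℝ) • q := by
        rw [hq', ht2, smul_smul]
        norm_num
      exact R.reduced q hq (by rw [← hp2]; exact hp)
    · -- w = 2, t = 1, q = p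
      have ht2 : t = 1 := by
        have : (2:ℝ) = 2 * t := by exact_mod_cast hwt
        linarith
      apply hpq
      rw [hq', ht2, one_smul]
    · omega
    · -- w = 4, t = 2, q = 2p
      have ht2 : t = 2 := by
        have : (4:ℝ) = 2 * t := by exact_mod_cast hwt
        linarith
      apply R.reduced p hp
      rw [← ht2, ← hq']
      exact hq
  · -- non-parallel
    have hcs : ⟪p, q⟫ * ⟪p, q⟫ < ⟪p, p⟫ * ⟪q, q⟫ :=
      lt_of_le_of_ne (real_inner_mul_inner_self_le p q) hpar
    have hzw : (z : ℝ) * (w : ℝ) < 4 := by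
      rw [← hz, ← hw]
      rw [div_mul_div_comm]
      rw [div_lt_iff₀ (by positivity)]
      nlinarith [hcs]
    have hzw' : z * w < 4 := by exact_mod_cast hzw
    have hor : z = 1 ∨ w = 1 := by
      by_contra hcon
      push_neg at hcon
      obtain ⟨hz2, hw2⟩ := hcon
      have : 2 ≤ z := by omega
      have : 2 ≤ w := by omega
      nlinarith
    rcases hor with h1 | h1
    · have := R.reflect_mem q hq p hp
      rw [hz, h1] at this
      simp only [Int.cast_one, one_smul] at this
      rcases this with h2 | h2
      · exact Or.inl h2
      · rw [neg_sub] at h2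
        exact Or.inr h2
    · have := R.reflect_mem p hp q hq
      rw [real_inner_comm p q, hw, h1] at this
      simp only [Int.cast_one, one_smul] at this
      rcases this with h2 | h2
      · exact Or.inr h2
      · rw [neg_sub] at h2
        exact Or.inl h2

/-- two positive roots with negative inner product sum to a positive root -/
lemma string_add {p q : V} (hp : p ∈ R.pos) (hq : q ∈ R.pos)
    (hin : ⟪p, q⟫ < 0) : p + q ∈ R.pos := by
  have hp0 : p ≠ 0 := R.root_ne p hp
  have hq0 : q ≠ 0 := R.root_ne q hq
  have hpp : 0 < ⟪p, p⟫ := inner_self_pos' hp0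
  have hqq : 0 < ⟪q, q⟫ := inner_self_pos' hq0
  obtain ⟨z, hz⟩ := R.crystallographic q hq p hp
  obtain ⟨w, hw⟩ := R.crystallographic p hp q hq
  rw [real_inner_comm p q] at hw
  have hz1 : z ≤ -1 := int_le_neg_one (by
    rw [← hz]
    apply div_neg_of_neg_of_pos _ hqq
    linarith)
  have hw1 : w ≤ -1 := int_le_neg_one (by
    rw [← hw]
    apply div_neg_of_neg_of_pos _ hpp
    linarith)
  -- helper: -(p+q) cannot be a positive root, so reflections give p+q ∈ pos
  have hnot : -(p + q) ∉ R.pos := by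
    intro hmem
    apply R.pos_add_nonneg_ne_zero hmem
      (c := fun α => (R.coeff p α : ℝ) + (R.coeff q α : ℝ))
      (fun α _ => by positivity)
    have : R.SR (fun α => (R.coeff p α : ℝ) + (R.coeff q α : ℝ)) = p + q := by
      rw [R.SR_add]
      congr 1
      · exact (R.coeff_spec' hp).symm
      · exact (R.coeff_spec' hq).symm
    rw [this]; abel
  by_cases hpar : ⟪p, q⟫ * ⟪p, q⟫ = ⟪p, p⟫ * ⟪q, q⟫
  · -- parallel: q = t p with t < 0: impossible
    exfalso
    have hq' := parallel_of_cs hp0 hpar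
    set t : ℝ := ⟪p, q⟫ / ⟪p, p⟫ with hts
    have ht : t < 0 := div_neg_of_neg_of_pos hin hpp
    -- q - t • p = 0, so q + (-t) • p = 0
    have h0 : q + R.SR (fun α => (R.coeff p α : ℝ) * (-t)) = 0 := by
      have e : R.SR (fun α => (R.coeff p α : ℝ) * (-t)) = (-t) • p := by
        rw [show (-t) • p = (-t) • R.SN (R.coeff p) from by rw [← R.coeff_spec' hp]]
        rw [SN, SR, Finset.smul_sum]
        apply Finset.sum_congr rfl
        intro α _
        rw [smul_smul, mul_comm]
      rw [e, hq']
      rw [← add_smul]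
      simp
    have h1 : q + R.SR (fun α => (R.coeff p α : ℝ) * (-t)) ≠ 0 :=
      R.pos_add_nonneg_ne_zero hq (fun α _ => by
        have : (0:ℝ) ≤ (R.coeff p α : ℝ) := Nat.cast_nonneg _
        nlinarith)
    exact h1 h0
  · have hcs : ⟪p, q⟫ * ⟪p, q⟫ < ⟪p, p⟫ * ⟪q, q⟫ :=
      lt_of_le_of_ne (real_inner_mul_inner_self_le p q) hpar
    have hzw : (z : ℝ) * (w : ℝ) < 4 := by
      rw [← hz, ← hw]
      rw [div_mul_div_comm]
      rw [div_lt_iff₀ (by positivity)]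
      nlinarith [hcs]
    have hzw' : z * w < 4 := by exact_mod_cast hzw
    have hor : z = -1 ∨ w = -1 := by
      by_contra hcon
      push_neg at hcon
      obtain ⟨hz2, hw2⟩ := hcon
      have : z ≤ -2 := by omega
      have : w ≤ -2 := by omega
      nlinarith
    rcases hor with h1 | h1
    · have := R.reflect_mem q hq p hp
      rw [hz, h1] at this
      simp only [Int.cast_neg, Int.cast_one, neg_smul, one_smul, sub_neg_eq_add] at this
      rcases this with h2 | h2
      · exact h2
      · exact absurd h2 hnot
    · have := R.reflect_mem p hp q hq
      rw [real_inner_comm p q, hw, h1] at this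
      simp only [Int.cast_neg, Int.cast_one, neg_smul, one_smul, sub_neg_eq_add] at this
      rcases this with h2 | h2
      · rw [show q + p = p + q from by abel] at h2
        exact h2
      · rw [show -(q + p) = -(p+q) from by abel] at h2
        exact absurd h2 hnot

end SimpleRS
end Part2
section Part3
variable {V : Type*} [NormedAddCommGroup V] [InnerProductSpace ℝ V] (R : SimpleRS V)
namespace SimpleRS
open scoped Classical

lemma rle_coeff_le {μ ν : V} (hμ : μ ∈ R.pos) (hν : ν ∈ R.pos) (h : R.rle μ ν) :
    ∀ α ∈ R.simple, R.coeff μ α ≤ R.coeff ν α := by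
  obtain ⟨c, hc⟩ := h
  have hce : R.SN c = ν - μ := hc.symm
  have hkey : ν = R.SN (fun α => R.coeff μ α + c α) := by
    rw [R.SN_add, ← R.coeff_spec' hμ, hce]; abel
  intro α hα
  have := R.coeff_eq hν hkey α hα
  omega

lemma rle_of_coeff_le {μ ν : V} (hμ : μ ∈ R.pos) (hν : ν ∈ R.pos)
    (h : ∀ α ∈ R.simple, R.coeff μ α ≤ R.coeff ν α) : R.rle μ ν := by
  refine ⟨fun α => R.coeff ν α - R.coeff μ α, ?_⟩
  show ν - μ = R.SN (fun α => R.coeff ν α - R.coeff μ α)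
  have e : R.SN (fun α => R.coeff ν α - R.coeff μ α)
      = R.SN (R.coeff ν) - R.SN (R.coeff μ) := by
    rw [SN, SN, SN, ← Finset.sum_sub_distrib]
    apply Finset.sum_congr rfl
    intro α hα
    rw [Nat.cast_sub (h α hα), sub_smul]
  rw [e, ← R.coeff_spec' hμ, ← R.coeff_spec' hν]

lemma eq_of_coeff_eq {μ ν : V} (hμ : μ ∈ R.pos) (hν : ν ∈ R.pos)
    (h : ∀ α ∈ R.simple, R.coeff μ α = R.coeff ν α) : μ = ν := by
  rw [R.coeff_spec' hμ, R.coeff_spec' hν, SN, SN]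
  apply Finset.sum_congr rfl
  intro α hα
  rw [h α hα]

lemma ht_le_of_rle {μ ν : V} (hμ : μ ∈ R.pos) (hν : ν ∈ R.pos) (h : R.rle μ ν) :
    R.ht μ ≤ R.ht ν :=
  Finset.sum_le_sum (R.rle_coeff_le hμ hν h)

lemma ht_lt_of_rle_ne {μ ν : V} (hμ : μ ∈ R.pos) (hν : ν ∈ R.pos) (h : R.rle μ ν)
    (hne : μ ≠ ν) : R.ht μ < R.ht ν := by
  have hle := R.rle_coeff_le hμ hν h
  have : ∃ α ∈ R.simple, R.coeff μ α < R.coeff ν α := by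
    by_contra hcon
    push_neg at hcon
    exact hne (R.eq_of_coeff_eq hμ hν (fun α hα => le_antisymm (hle α hα) (hcon α hα)))
  obtain ⟨α, hα, hlt⟩ := this
  exact Finset.sum_lt_sum hle ⟨α, hα, hlt⟩

lemma ht_pos {μ : V} (hμ : μ ∈ R.pos) : 1 ≤ R.ht μ := by
  by_contra h
  push_neg at h
  have h0 : R.ht μ = 0 := by omega
  apply R.root_ne μ hμ
  rw [R.coeff_spec' hμ, SN]
  apply Finset.sum_eq_zero
  intro α hα
  have : R.coeff μ α = 0 := by
    have := Finset.sum_eq_zero_iff.mp h0 α hα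
    exact this
  simp [this]

lemma coeff_simple {α : V} (hα : α ∈ R.simple) :
    ∀ β ∈ R.simple, R.coeff α β = if β = α then 1 else 0 := by
  intro β hβ
  exact (R.coeff_eq (R.simple_sub hα) (R.SN_single hα).symm β hβ).symm

lemma ht_simple {α : V} (hα : α ∈ R.simple) : R.ht α = 1 := by
  rw [ht]
  rw [Finset.sum_congr rfl (R.coeff_simple hα)]
  rw [Finset.sum_ite_eq' R.simple α (fun _ => 1), if_pos hα]

/-- key arithmetic: shifting a relation witness by one simple root -/
lemma rle_shift {μ ζ α : V} (hα : α ∈ R.simple) {c : V → ℕ} (hc : ζ - μ = R.SN c)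
    (hcα : c α ≠ 0) : ζ - (μ + α) = R.SN (fun β => c β - if β = α then 1 else 0) := by
  have e1 : R.SN (fun β => (c β - if β = α then 1 else 0) + (if β = α then 1 else 0)) =
      R.SN (fun β => c β) := by
    congr 1
    ext β
    by_cases h : β = α
    · subst h; simp; omega
    · simp [h]
  rw [R.SN_add, R.SN_single hα] at e1
  have : R.SN (fun β => c β - if β = α then 1 else 0) = R.SN c - α := by
    rw [← e1]; abel
  rw [this, ← hc]; abel

lemma rle_add_simple {α : V} (hα : α ∈ R.simple) (μ : V) : R.rle μ (μ + α) :=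
  ⟨fun β => if β = α then 1 else 0, by rw [show μ + α - μ = α from by abel]; exact (R.SN_single hα).symm⟩

/-- coefficients of a sum with a simple root -/
lemma coeff_add_simple {y α : V} (hy : y ∈ R.pos) (hα : α ∈ R.simple) (h : y + α ∈ R.pos) :
    ∀ β ∈ R.simple, R.coeff (y + α) β = R.coeff y β + (if β = α then 1 else 0) := by
  intro β hβ
  have e := R.SN_add (R.coeff y) (fun β => if β = α then 1 else 0)
  rw [R.SN_single hα, ← R.coeff_spec' hy] at e
  exact (R.coeff_eq h e.symm β hβ).symm

lemma ht_add_simple {y α : V} (hy : y ∈ R.pos) (hα : α ∈ R.simple) (h : y + α ∈ R.pos) :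
    R.ht (y + α) = R.ht y + 1 := by
  rw [ht, ht, Finset.sum_congr rfl (R.coeff_add_simple hy hα h), Finset.sum_add_distrib]
  congr 1
  rw [Finset.sum_ite_eq' R.simple α (fun _ => 1), if_pos hα]

lemma simple_ne_zero {α : V} (hα : α ∈ R.simple) : α ≠ 0 := R.root_ne α (R.simple_sub hα)

/-- the difference of two distinct simple roots is never a positive root -/
lemma simple_sub_not_pos {α β : V} (hα : α ∈ R.simple) (hβ : β ∈ R.simple)
    (hne : α ≠ β) : β - α ∉ R.pos := by
  intro hmem
  have hkey : β = R.SN (fun γ => R.coeff (β - α) γ + R.coeff α γ) := by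
    rw [R.SN_add, ← R.coeff_spec' hmem, ← R.coeff_spec' (R.simple_sub hα)]; abel
  have h1 := R.coeff_eq (R.simple_sub hβ) hkey α hα
  rw [R.coeff_simple hβ α hα] at h1
  rw [R.coeff_simple hα α hα] at h1
  simp [hne] at h1

/-- distinct simple roots have nonpositive inner product -/
lemma inner_simple_nonpos {α β : V} (hα : α ∈ R.simple) (hβ : β ∈ R.simple)
    (hne : α ≠ β) : ⟪α, β⟫ ≤ 0 := by
  by_contra h
  push_neg at h
  have := R.string_sub (R.simple_sub hα) (R.simple_sub hβ) hne h
  rcases this with h2 | h2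
  · exact R.simple_sub_not_pos hβ hα (Ne.symm hne) h2
  · exact R.simple_sub_not_pos hα hβ hne h2

end SimpleRS
end Part3
section Part4
variable {V : Type*} [NormedAddCommGroup V] [InnerProductSpace ℝ V] (R : SimpleRS V)
namespace SimpleRS
open scoped Classical

/-- chain lemma: between two comparable positive roots there is a chain of positive
roots descending by simple roots, all of them above the lower root -/
lemma chain : ∀ k : ℕ, ∀ μ ζ : V, μ ∈ R.pos → ζ ∈ R.pos → R.rle μ ζ →
    R.ht ζ ≤ R.ht μ + k →
    Relation.ReflTransGen
      (fun x y => (y ∈ R.pos ∧ R.rle μ y) ∧ ∃ α ∈ R.simple, x = y + α) ζ μ := by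
  intro k
  induction k with
  | zero =>
    intro μ ζ hμ hζ hrle hht
    have : μ = ζ := by
      apply R.eq_of_coeff_eq hμ hζ
      intro α hα
      by_contra hne
      have h1 := R.rle_coeff_le hμ hζ hrle
      have h2 : R.coeff μ α < R.coeff ζ α := lt_of_le_of_ne (h1 α hα) hne
      have : R.ht μ < R.ht ζ := Finset.sum_lt_sum h1 ⟨α, hα, h2⟩
      omega
    rw [this]
  | succ k ih =>
    intro μ ζ hμ hζ hrle hht
    rcases eq_or_ne ζ μ with rfl | hne
    · exact Relation.ReflTransGen.refl
    obtain ⟨c, hc⟩ := hrle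
    have hcSN : ζ - μ = R.SN c := hc
    have hsub : ζ - μ ≠ 0 := sub_ne_zero.mpr hne
    have hpos : 0 < ⟪ζ - μ, ζ - μ⟫ := inner_self_pos' hsub
    have hsplit : 0 < ⟪R.SN c, ζ⟫ ∨ ⟪R.SN c, μ⟫ < 0 := by
      by_contra hcon
      push_neg at hcon
      obtain ⟨h1, h2⟩ := hcon
      have e : ⟪ζ - μ, ζ - μ⟫ = ⟪R.SN c, ζ⟫ - ⟪R.SN c, μ⟫ := by
        rw [← inner_sub_right, ← hcSN]
      rw [e] at hpos
      linarith
    rcases hsplit with hcase | hcase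
    · -- descend from ζ
      obtain ⟨α, hα, hcα, hio⟩ := R.exists_pos_inner hcase
      have hαζ : α ≠ ζ := by
        intro h
        subst h
        have h1 : R.ht α = 1 := R.ht_simple hα
        have h2 : 1 ≤ R.ht μ := R.ht_pos hμ
        have h3 : R.ht μ < R.ht α :=
          R.ht_lt_of_rle_ne hμ (R.simple_sub hα) ⟨c, hc⟩ (Ne.symm hne)
        omega
      have hstr := R.string_sub hζ (R.simple_sub hα) (Ne.symm hαζ)
        (by rw [real_inner_comm]; exact hio)
      have hshift := R.rle_shift hα hcSN hcα
      have hrle' : R.rle μ (ζ - α) :=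
        ⟨fun β => c β - if β = α then 1 else 0, by
          rw [show ζ - α - μ = ζ - (μ + α) from by abel]; exact hshift⟩
      have hζα : ζ - α ∈ R.pos := by
        apply R.pos_of_rle_isRoot hμ hrle'
        rcases hstr with h | h
        · exact Or.inl h
        · right; rw [neg_sub]; exact h
      have hht' : R.ht (ζ - α) ≤ R.ht μ + k := by
        have : R.ht (ζ - α + α) = R.ht (ζ - α) + 1 :=
          R.ht_add_simple hζα hα (by rw [sub_add_cancel]; exact hζ)
        rw [sub_add_cancel] at this
        omega
      have hrec := ih μ (ζ - α) hμ hζα hrle' hht'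
      exact Relation.ReflTransGen.head
        ⟨⟨hζα, hrle'⟩, α, hα, by abel⟩ hrec
    · -- raise μ
      obtain ⟨α, hα, hcα, hio⟩ := R.exists_neg_inner hcase
      have hμα : μ + α ∈ R.pos := by
        rw [show μ + α = α + μ from by abel]
        exact R.string_add (R.simple_sub hα) hμ hio
      have hshift := R.rle_shift hα hcSN hcα
      have hrle' : R.rle (μ + α) ζ := ⟨fun β => c β - if β = α then 1 else 0, hshift⟩
      have hht' : R.ht ζ ≤ R.ht (μ + α) + k := by
        have : R.ht (μ + α) = R.ht μ + 1 := R.ht_add_simple hμ hα hμα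
        omega
      have hrec := ih (μ + α) ζ hμα hζ hrle' hht'
      have hmono := Relation.ReflTransGen.mono
        (r := fun x y => (y ∈ R.pos ∧ R.rle (μ + α) y) ∧ ∃ β ∈ R.simple, x = y + β)
        (p := fun x y => (y ∈ R.pos ∧ R.rle μ y) ∧ ∃ β ∈ R.simple, x = y + β)
        (fun x y hxy => ⟨⟨hxy.1.1, R.rle_trans (R.rle_add_simple hα μ) hxy.1.2⟩, hxy.2⟩)
        _ _ hrec
      exact Relation.ReflTransGen.tail hmono ⟨⟨hμ, R.rle_refl μ⟩, α, hα, rfl⟩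

end SimpleRS
end Part4
section Part5
variable {V : Type*} [NormedAddCommGroup V] [InnerProductSpace ℝ V] (R : SimpleRS V)
namespace SimpleRS
open scoped Classical

/-- generic existence of minimal elements below a given one -/
lemma exists_min_general (P : V → Prop) (hP : ∀ t, P t → t ∈ R.pos) :
    ∀ n : ℕ, ∀ t, P t → R.ht t ≤ n →
      ∃ m, P m ∧ R.rle m t ∧ ∀ y, P y → R.rle y m → y = m := by
  intro n
  induction n with
  | zero =>
    intro t ht hht
    have := R.ht_pos (hP t ht)
    omega
  | succ n ih =>
    intro t ht hht
    by_cases hmin : ∀ y, P y → R.rle y t → y = t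
    · exact ⟨t, ht, R.rle_refl t, hmin⟩
    · push_neg at hmin
      obtain ⟨y, hy, hyt, hne⟩ := hmin
      have hlt : R.ht y < R.ht t := R.ht_lt_of_rle_ne (hP y hy) (hP t ht) hyt hne
      obtain ⟨m, hm, hmy, hmin'⟩ := ih y hy (by omega)
      exact ⟨m, hm, R.rle_trans hmy hyt, hmin'⟩

/-- the diamond property for descents inside an upper set -/
lemma diamond {η₁ η₂ : V} (h1 : η₁ ∈ R.pos) :
    ∀ x y₁ y₂ : V,
    ((y₁ ∈ R.pos ∧ R.rle η₁ y₁ ∧ R.rle η₂ y₁) ∧ ∃ α ∈ R.simple, x = y₁ + α) →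
    ((y₂ ∈ R.pos ∧ R.rle η₁ y₂ ∧ R.rle η₂ y₂) ∧ ∃ α ∈ R.simple, x = y₂ + α) →
    ∃ d, Relation.ReflGen
        (fun x y => (y ∈ R.pos ∧ R.rle η₁ y ∧ R.rle η₂ y) ∧ ∃ α ∈ R.simple, x = y + α) y₁ d ∧
      Relation.ReflTransGen
        (fun x y => (y ∈ R.pos ∧ R.rle η₁ y ∧ R.rle η₂ y) ∧ ∃ α ∈ R.simple, x = y + α) y₂ d := by
  intro x y₁ y₂ hD1 hD2
  obtain ⟨⟨hy₁p, hy₁1, hy₁2⟩, α, hα, hx1⟩ := hD1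
  obtain ⟨⟨hy₂p, hy₂1, hy₂2⟩, β, hβ, hx2⟩ := hD2
  rcases eq_or_ne α β with rfl | hab
  · -- same step
    have hy12 : y₁ = y₂ := by
      have h : y₁ + α = y₂ + α := by rw [← hx1, ← hx2]
      exact add_right_cancel h
    subst hy12
    exact ⟨y₁, Relation.ReflGen.refl, Relation.ReflTransGen.refl⟩
  · -- distinct simple steps: go down to the common element z
    have hxx : y₁ + α = y₂ + β := by rw [← hx1, ← hx2]
    set z : V := y₁ - β with hzdef
    have hz2 : y₂ - α = z := by
      rw [hzdef]
      have : y₂ = y₁ + α - β := eq_sub_of_add_eq hxx.symm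
      rw [this]; abel
    -- coefficient bookkeeping for η₁
    obtain ⟨c₁, hc₁⟩ := hy₁1
    obtain ⟨c₂, hc₂⟩ := hy₂1
    have hc₁' : y₁ - η₁ = R.SN c₁ := hc₁
    have hc₂' : y₂ - η₁ = R.SN c₂ := hc₂
    have hsum : R.SN (fun γ => c₁ γ + if γ = α then 1 else 0)
        = R.SN (fun γ => c₂ γ + if γ = β then 1 else 0) := by
      rw [R.SN_add, R.SN_add, R.SN_single hα, R.SN_single hβ, ← hc₁', ← hc₂']
      have : y₂ = y₁ + α - β := eq_sub_of_add_eq hxx.symm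
      rw [this]; abel
    have hcoefβ : c₁ β = c₂ β + 1 := by
      have h3 := R.SR_ext
        (c := fun γ => (((c₁ γ + if γ = α then 1 else 0 : ℕ)) : ℝ))
        (d := fun γ => (((c₂ γ + if γ = β then 1 else 0 : ℕ)) : ℝ)) hsum β hβ
      have h3' : ((c₁ β + if β = α then 1 else 0 : ℕ) : ℝ)
          = ((c₂ β + if β = β then 1 else 0 : ℕ) : ℝ) := h3
      have h4 : c₁ β + (if β = α then 1 else 0) = c₂ β + (if β = β then 1 else 0) := by
        exact_mod_cast h3'
      rw [if_neg (Ne.symm hab), if_pos rfl] at h4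
      omega
    have hc₁β : c₁ β ≠ 0 := by omega
    have hrz1 : R.rle η₁ z := by
      refine ⟨fun γ => c₁ γ - if γ = β then 1 else 0, ?_⟩
      have := R.rle_shift hβ hc₁' hc₁β
      rw [show z - η₁ = y₁ - (η₁ + β) from by rw [hzdef]; abel]
      exact this
    -- coefficient bookkeeping for η₂
    obtain ⟨d₁, hd₁⟩ := hy₁2
    obtain ⟨d₂, hd₂⟩ := hy₂2
    have hd₁' : y₁ - η₂ = R.SN d₁ := hd₁
    have hd₂' : y₂ - η₂ = R.SN d₂ := hd₂
    have hsum2 : R.SN (fun γ => d₁ γ + if γ = α then 1 else 0)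
        = R.SN (fun γ => d₂ γ + if γ = β then 1 else 0) := by
      rw [R.SN_add, R.SN_add, R.SN_single hα, R.SN_single hβ, ← hd₁', ← hd₂']
      have : y₂ = y₁ + α - β := eq_sub_of_add_eq hxx.symm
      rw [this]; abel
    have hdoefβ : d₁ β = d₂ β + 1 := by
      have h3 := R.SR_ext
        (c := fun γ => (((d₁ γ + if γ = α then 1 else 0 : ℕ)) : ℝ))
        (d := fun γ => (((d₂ γ + if γ = β then 1 else 0 : ℕ)) : ℝ)) hsum2 β hβ
      have h3' : ((d₁ β + if β = α then 1 else 0 : ℕ) : ℝ)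
          = ((d₂ β + if β = β then 1 else 0 : ℕ) : ℝ) := h3
      have h4 : d₁ β + (if β = α then 1 else 0) = d₂ β + (if β = β then 1 else 0) := by
        exact_mod_cast h3'
      rw [if_neg (Ne.symm hab), if_pos rfl] at h4
      omega
    have hd₁β : d₁ β ≠ 0 := by omega
    have hrz2 : R.rle η₂ z := by
      refine ⟨fun γ => d₁ γ - if γ = β then 1 else 0, ?_⟩
      have := R.rle_shift hβ hd₁' hd₁β
      rw [show z - η₂ = y₁ - (η₂ + β) from by rw [hzdef]; abel]
      exact this
    have hz0 : z ≠ 0 := R.rle_pos_ne_zero h1 hrz1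
    -- z is a root
    have hisroot : z ∈ R.pos ∨ -z ∈ R.pos := by
      by_cases hcy2 : 0 < ⟪y₂, α⟫
      · have hne : y₂ ≠ α := by
          intro h
          apply hz0
          rw [← hz2, h, sub_self]
        have hstr := R.string_sub hy₂p (R.simple_sub hα) hne hcy2
        rcases hstr with h | h
        · left; rw [← hz2]; exact h
        · right; rw [← hz2, neg_sub]; exact h
      · by_cases hcy1 : 0 < ⟪y₁, β⟫
        · have hne : y₁ ≠ β := by
            intro h
            apply hz0
            rw [hzdef, h, sub_self]
          have hstr := R.string_sub hy₁p (R.simple_sub hβ) hne hcy1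
          rcases hstr with h | h
          · left; exact h
          · right; rw [neg_sub]; exact h
        · exfalso
          push_neg at hcy2 hcy1
          have hab0 : ⟪α, β⟫ ≤ 0 := R.inner_simple_nonpos hα hβ hab
          have hx0 : x ≠ 0 := by
            rw [hx1, ← R.SN_single hα]
            exact R.pos_add_nonneg_ne_zero hy₁p (fun γ _ => by positivity)
          have hxx0 : 0 < ⟪x, x⟫ := inner_self_pos' hx0
          have e1 : y₁ = x - α := by rw [hx1]; abel
          have e2 : y₂ = x - β := by rw [hx2]; abel
          have hA : ⟪x, α⟫ - ⟪β, α⟫ ≤ 0 := by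
            have h := hcy2
            rw [e2, inner_sub_left] at h
            linarith
          have hB : ⟪x, β⟫ - ⟪α, β⟫ ≤ 0 := by
            have h := hcy1
            rw [e1, inner_sub_left] at h
            linarith
          have e12 : ⟪y₁, y₂⟫ = ⟪x, x⟫ - ⟪x, β⟫ - ⟪α, x⟫ + ⟪α, β⟫ := by
            rw [e1, e2]
            simp only [inner_sub_left, inner_sub_right]
            ring
          have hcomm1 : ⟪α, x⟫ = ⟪x, α⟫ := real_inner_comm x α
          have hcomm2 : ⟪β, α⟫ = ⟪α, β⟫ := real_inner_comm α β
          have hy1y2 : 0 < ⟪y₁, y₂⟫ := by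
            rw [e12]
            linarith
          have hy12ne : y₁ ≠ y₂ := by
            intro h
            apply hab
            rw [h] at hxx
            exact add_left_cancel hxx
          have hstr := R.string_sub hy₁p hy₂p hy12ne hy1y2
          have hd12 : y₁ - y₂ = β - α := by
            have : y₂ = y₁ + α - β := eq_sub_of_add_eq hxx.symm
            rw [this]; abel
          rcases hstr with h | h
          · rw [hd12] at h
            exact R.simple_sub_not_pos hα hβ hab h
          · rw [show y₂ - y₁ = α - β from by rw [← neg_sub, hd12]; abel] at h
            exact R.simple_sub_not_pos hβ hα (Ne.symm hab) h
    have hzpos : z ∈ R.pos := R.pos_of_rle_isRoot h1 hrz1 hisroot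
    refine ⟨z, Relation.ReflGen.single ⟨⟨hzpos, hrz1, hrz2⟩, β, hβ, by rw [hzdef]; abel⟩,
      Relation.ReflTransGen.single ⟨⟨hzpos, hrz1, hrz2⟩, α, hα, by rw [← hz2]; abel⟩⟩

/-- existence of least upper bounds among positive roots -/
lemma join_exists {η₁ η₂ : V} (h1 : η₁ ∈ R.pos) (h2 : η₂ ∈ R.pos) :
    ∃ s, s ∈ R.pos ∧ R.rle η₁ s ∧ R.rle η₂ s ∧
      ∀ t, t ∈ R.pos → R.rle η₁ t → R.rle η₂ t → R.rle s t := by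
  set P : V → Prop := fun t => t ∈ R.pos ∧ R.rle η₁ t ∧ R.rle η₂ t with hP
  set D : V → V → Prop := fun x y => (y ∈ R.pos ∧ R.rle η₁ y ∧ R.rle η₂ y) ∧
    ∃ α ∈ R.simple, x = y + α with hD
  have hPθ : P R.highest :=
    ⟨R.highest_mem, R.highest_spec η₁ h1, R.highest_spec η₂ h2⟩
  -- minimal elements have no D-descent, so they are normal forms
  have hnormal : ∀ m, P m → (∀ y, P y → R.rle y m → y = m) →
      ∀ d, Relation.ReflTransGen D m d → m = d := by
    intro m hm hmin d hrtg
    rcases Relation.ReflTransGen.cases_head hrtg with h | ⟨y, hy, _⟩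
    · exact h
    · exfalso
      obtain ⟨⟨hyp, hy1, hy2⟩, α, hα, hstep⟩ := hy
      have hylem : R.rle y m := by rw [hstep]; exact R.rle_add_simple hα y
      have := hmin y ⟨hyp, hy1, hy2⟩ hylem
      rw [this] at hstep
      have hα0 : α = 0 := by
        have := hstep
        rwa [left_eq_add] at this
      exact R.simple_ne_zero hα hα0
  -- chains from θ down to any minimal element, within the upper set
  have hchain : ∀ m, P m → Relation.ReflTransGen D R.highest m := by
    intro m hm
    have hrleθ : R.rle m R.highest := R.highest_spec m hm.1
    have hch := R.chain (R.ht R.highest) m R.highest hm.1 R.highest_mem hrleθ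
      (Nat.le_add_left _ _)
    apply Relation.ReflTransGen.mono
      (r := fun x y => (y ∈ R.pos ∧ R.rle m y) ∧ ∃ α ∈ R.simple, x = y + α) ?_ _ _ hch
    intro x y hxy
    exact ⟨⟨hxy.1.1, R.rle_trans hm.2.1 hxy.1.2, R.rle_trans hm.2.2 hxy.1.2⟩, hxy.2⟩
  -- uniqueness of minimal elements via confluence
  have huniq : ∀ m m', P m → (∀ y, P y → R.rle y m → y = m) →
      P m' → (∀ y, P y → R.rle y m' → y = m') → m = m' := by
    intro m m' hm hmmin hm' hm'min
    have hcr := Relation.church_rosser (r := D) (R.diamond h1) (hchain m hm) (hchain m' hm')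
    obtain ⟨d, hmd, hm'd⟩ := hcr
    rw [hnormal m hm hmmin d hmd, hnormal m' hm' hm'min d hm'd]
  obtain ⟨s, hs, hsθ, hsmin⟩ :=
    R.exists_min_general P (fun t ht => ht.1) (R.ht R.highest) R.highest hPθ le_rfl
  refine ⟨s, hs.1, hs.2.1, hs.2.2, ?_⟩
  intro t htp ht1 ht2
  obtain ⟨m, hm, hmt, hmmin⟩ :=
    R.exists_min_general P (fun t ht => ht.1) (R.ht t) t ⟨htp, ht1, ht2⟩ le_rfl
  have : s = m := huniq s m hs hsmin hm hmmin
  rw [this]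
  exact hmt

end SimpleRS
end Part5
section Part6
variable {V : Type*} [NormedAddCommGroup V] [InnerProductSpace ℝ V] (R : SimpleRS V)

theorem stmt4' {γ : V} (hγ : γ ∈ R.pos)
    {η₁ η₂ : V} (h1 : η₁ ∈ R.pos) (h2 : η₂ ∈ R.pos)
    (hg1 : R.rle γ η₁) (hg2 : R.rle γ η₂) :
    (∃ s, (s ∈ R.pos ∧ R.rle γ s) ∧ R.rle η₁ s ∧ R.rle η₂ s ∧
        ∀ t, (t ∈ R.pos ∧ R.rle γ t) → R.rle η₁ t → R.rle η₂ t → R.rle s t) ∧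
    (∃ m, (m ∈ R.pos ∧ R.rle γ m) ∧ R.rle m η₁ ∧ R.rle m η₂ ∧
        ∀ t, (t ∈ R.pos ∧ R.rle γ t) → R.rle t η₁ → R.rle t η₂ → R.rle t m) := by
  classical
  constructor
  · obtain ⟨s, hsp, hs1, hs2, hleast⟩ := R.join_exists h1 h2
    exact ⟨s, ⟨hsp, R.rle_trans hg1 hs1⟩, hs1, hs2,
      fun t ht ht1 ht2 => hleast t ht.1 ht1 ht2⟩
  · have key : ∀ s : Finset V, ∃ m, (m ∈ R.pos ∧ R.rle γ m ∧ R.rle m η₁ ∧ R.rle m η₂) ∧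
        ∀ t ∈ s, t ∈ R.pos → R.rle γ t → R.rle t η₁ → R.rle t η₂ → R.rle t m := by
      intro s
      induction s using Finset.induction_on with
      | empty =>
        exact ⟨γ, ⟨hγ, R.rle_refl γ, hg1, hg2⟩,
          fun t ht => absurd ht (Finset.notMem_empty t)⟩
      | @insert a s ha ih =>
        obtain ⟨m, ⟨hmp, hγm, hm1, hm2⟩, hmax⟩ := ih
        by_cases haP : a ∈ R.pos ∧ R.rle γ a ∧ R.rle a η₁ ∧ R.rle a η₂
        · obtain ⟨hap, hγa, ha1, ha2⟩ := haP
          obtain ⟨j, hjp, hmj, haj, hjleast⟩ := R.join_exists hmp hap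
          refine ⟨j, ⟨hjp, R.rle_trans hγm hmj,
            hjleast η₁ h1 hm1 ha1, hjleast η₂ h2 hm2 ha2⟩, ?_⟩
          intro t ht htp hγt ht1 ht2
          rcases Finset.mem_insert.mp ht with rfl | hts
          · exact haj
          · exact R.rle_trans (hmax t hts htp hγt ht1 ht2) hmj
        · refine ⟨m, ⟨hmp, hγm, hm1, hm2⟩, ?_⟩
          intro t ht htp hγt ht1 ht2
          rcases Finset.mem_insert.mp ht with rfl | hts
          · exact absurd ⟨htp, hγt, ht1, ht2⟩ haP
          · exact hmax t hts htp hγt ht1 ht2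
    obtain ⟨m, ⟨hmp, hγm, hm1, hm2⟩, hmax⟩ := key R.pos
    exact ⟨m, ⟨hmp, hγm⟩, hm1, hm2,
      fun t ht ht1 ht2 => hmax t ht.1 ht.1 ht.2 ht1 ht2⟩

end Part6

/-- for any positive root `γ`, the upper ideal
`I⟨≽γ⟩ = {ν ∈ Δ⁺ : ν ≽ γ}` is a lattice under the root order: any two of its
elements have a least upper bound and a greatest lower bound within it. -/
theorem stmt4 {V : Type*} [NormedAddCommGroup V] [InnerProductSpace ℝ V]
    (R : SimpleRS V) {γ : V} (hγ : γ ∈ R.pos)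
    {η₁ η₂ : V} (h1 : η₁ ∈ R.pos) (h2 : η₂ ∈ R.pos)
    (hg1 : R.rle γ η₁) (hg2 : R.rle γ η₂) :
    (∃ s, (s ∈ R.pos ∧ R.rle γ s) ∧ R.rle η₁ s ∧ R.rle η₂ s ∧
        ∀ t, (t ∈ R.pos ∧ R.rle γ t) → R.rle η₁ t → R.rle η₂ t → R.rle s t) ∧
    (∃ m, (m ∈ R.pos ∧ R.rle γ m) ∧ R.rle m η₁ ∧ R.rle m η₂ ∧
        ∀ t, (t ∈ R.pos ∧ R.rle γ t) → R.rle t η₁ → R.rle t η₂ → R.rle t m) :=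
  stmt4' R hγ h1 h2 hg1 hg2
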